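/- arXiv:1705.09542 — 3 statements merged into one kernel-verified Lean document; each statement's English description precedes it below -/
import Mathlib

section
/- Let f_1,...,f_n be nonzero reals, h as above with s(y) = sup_x |h(x)|/|h(yx)| < ∞ for y ≠ 0. The map φ: L²(ℝ) → L²(ℝ) defined by φ(r)(x) = (|f_1|/n_1)(h(x)/h(f_1 x)) g_1(f_1 x) − ∑_{k: f_k ≠ f_1} (|f_1|/(n_1 |f_k|)) (h(x)/h((f_1/f_k)x)) r((f_1/f_k)x) is a contraction on L²(ℝ) with Lipschitz constant at most e(f,h) = (1/n_1) ∑_{k: f_k ≠ f_1} s(f_1/f_k)·√(|f_1|/|f_k|), i.e. ‖φ(u_1) − φ(u_2)‖₂ ≤ e(f,h)·‖u_1 − u_2‖₂ for all u_1, u_2 ∈ L²(ℝ). -/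
open MeasureTheory Finset ENNReal

/-- Scaling lemma: L² norm of `x ↦ w (c x)`. -/
lemma scale_eLpNorm {c : ℝ} (hc : c ≠ 0) (w : ℝ → ℝ)
    (hw : AEStronglyMeasurable w (volume : Measure ℝ)) :
    eLpNorm (fun x => w (c * x)) 2 (volume : Measure ℝ) =
      ENNReal.ofReal (Real.sqrt |c|⁻¹) * eLpNorm w 2 (volume : Measure ℝ) := by
  have hmap : Measure.map (c * ·) (volume : Measure ℝ) = ENNReal.ofReal |c⁻¹| • volume :=
    Real.map_volume_mul_left hc
  have hw' : AEStronglyMeasurable w (Measure.map (c * ·) (volume : Measure ℝ)) := by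
    rw [hmap]; exact hw.mono_ac Measure.smul_absolutelyContinuous
  have h1 : eLpNorm w 2 (Measure.map (c * ·) (volume : Measure ℝ)) =
      eLpNorm (fun x => w (c * x)) 2 volume :=
    eLpNorm_map_measure hw' (measurable_const_mul c).aemeasurable
  rw [← h1, hmap, eLpNorm_smul_measure_of_ne_zero (by positivity) w 2 volume]
  have h2 : ((1 : ℝ≥0∞) / 2).toReal = (1 : ℝ) / 2 := by norm_num
  rw [h2, smul_eq_mul]
  congr 1
  rw [ENNReal.ofReal_rpow_of_pos (by positivity), abs_inv, ← Real.sqrt_eq_rpow]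

/-- The operator `φ` from the Banach fixed-point argument is a contraction on `L²(ℝ)`
with Lipschitz constant at most `e(f,h)`. -/
theorem stmt1 {n : ℕ} (hn : 0 < n) (f : Fin n → ℝ) (hf : ∀ k, f k ≠ 0)
    (h : ℝ → ℝ) (hmeas : Measurable h) (hne : ∀ x, h x ≠ 0)
    (s : ℝ → ℝ) (hs : ∀ y, y ≠ 0 → ∀ x, |h x| / |h (y * x)| ≤ s y)
    (n₁ : ℕ) (hn₁ : n₁ = (Finset.univ.filter (fun k => f k = f ⟨0, hn⟩)).card)
    (g₁ : ℝ → ℝ) (hg₁ : MemLp g₁ 2 (volume : Measure ℝ))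
    (φ : (ℝ → ℝ) → ℝ → ℝ)
    (hφ : ∀ r : ℝ → ℝ, ∀ x : ℝ,
      φ r x = (|f ⟨0, hn⟩| / (n₁ : ℝ)) * (h x / h (f ⟨0, hn⟩ * x)) * g₁ (f ⟨0, hn⟩ * x)
        - ∑ k ∈ Finset.univ.filter (fun k => f k ≠ f ⟨0, hn⟩),
            (|f ⟨0, hn⟩| / ((n₁ : ℝ) * |f k|)) * (h x / h ((f ⟨0, hn⟩ / f k) * x))
              * r ((f ⟨0, hn⟩ / f k) * x))
    (u₁ u₂ : ℝ → ℝ) (hu₁ : MemLp u₁ 2 (volume : Measure ℝ))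
    (hu₂ : MemLp u₂ 2 (volume : Measure ℝ)) :
    eLpNorm (fun x => φ u₁ x - φ u₂ x) 2 (volume : Measure ℝ) ≤
      ENNReal.ofReal ((1 / (n₁ : ℝ)) * ∑ k ∈ Finset.univ.filter (fun k => f k ≠ f ⟨0, hn⟩),
          s (f ⟨0, hn⟩ / f k) * Real.sqrt (|f ⟨0, hn⟩| / |f k|)) *
        eLpNorm (fun x => u₁ x - u₂ x) 2 (volume : Measure ℝ) := by
  set a := f ⟨0, hn⟩ with ha
  have ha0 : a ≠ 0 := hf _
  set S := Finset.univ.filter (fun k => f k ≠ a) with hS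
  set w : ℝ → ℝ := fun x => u₂ x - u₁ x with hw
  have hwmeas : AEStronglyMeasurable w (volume : Measure ℝ) :=
    hu₂.aestronglyMeasurable.sub hu₁.aestronglyMeasurable
  have hn₁pos : 0 < n₁ := hn₁ ▸ Finset.card_pos.mpr ⟨⟨0, hn⟩, by simp [ha]⟩
  have hn₁R : (0 : ℝ) < (n₁ : ℝ) := by exact_mod_cast hn₁pos
  -- the per-index function
  set F : Fin n → ℝ → ℝ := fun k => fun x =>
    (|a| / ((n₁ : ℝ) * |f k|)) * (h x / h ((a / f k) * x)) * w ((a / f k) * x) with hF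
  have hFmeas : ∀ k, AEStronglyMeasurable (F k) (volume : Measure ℝ) := by
    intro k
    have hy : (a / f k) ≠ 0 := div_ne_zero ha0 (hf k)
    have hqmp : Measure.QuasiMeasurePreserving (fun x : ℝ => (a / f k) * x) volume volume :=
      ⟨measurable_const_mul _, by
        rw [Real.map_volume_mul_left hy]; exact Measure.smul_absolutelyContinuous⟩
    have h1 : AEStronglyMeasurable (fun x => w ((a / f k) * x)) (volume : Measure ℝ) :=
      hwmeas.comp_quasiMeasurePreserving hqmp
    have h2 : AEStronglyMeasurable
        (fun x => (|a| / ((n₁ : ℝ) * |f k|)) * (h x / h ((a / f k) * x))) (volume : Measure ℝ) :=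
      ((measurable_const.mul (hmeas.div (hmeas.comp (measurable_const_mul _))))).aestronglyMeasurable
    exact (h2.mul h1)
  -- rewrite the difference
  have hdiff : (fun x => φ u₁ x - φ u₂ x) = ∑ k ∈ S, F k := by
    funext x
    simp only [Finset.sum_apply, hφ, hF]
    rw [_root_.sub_sub_sub_cancel_left, ← Finset.sum_sub_distrib]
    exact Finset.sum_congr rfl (fun k _ => by ring)
  rw [hdiff]
  -- positivity of s on relevant points
  have hspos : ∀ k, 0 ≤ s (a / f k) := by
    intro k
    have hy : (a / f k) ≠ 0 := div_ne_zero ha0 (hf k)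
    refine le_trans ?_ (hs _ hy 1)
    positivity
  -- per-term bound
  have hterm : ∀ k ∈ S, eLpNorm (F k) 2 (volume : Measure ℝ) ≤
      ENNReal.ofReal ((1 / (n₁ : ℝ)) * (s (a / f k) * Real.sqrt (|a| / |f k|))) *
        eLpNorm w 2 (volume : Measure ℝ) := by
    intro k _
    have hy : (a / f k) ≠ 0 := div_ne_zero ha0 (hf k)
    set C : ℝ := |a| / ((n₁ : ℝ) * |f k|) * s (a / f k) with hC
    have hC0 : 0 ≤ C := by
      apply mul_nonneg _ (hspos k); positivity
    have hbd : ∀ᵐ x : ℝ ∂(volume : Measure ℝ),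
        ‖F k x‖ ≤ C.toNNReal * ‖w ((a / f k) * x)‖ := by
      refine Filter.Eventually.of_forall (fun x => ?_)
      have : ‖F k x‖ = |a| / ((n₁ : ℝ) * |f k|) * |h x / h ((a / f k) * x)| *
          ‖w ((a / f k) * x)‖ := by
        simp only [hF, Real.norm_eq_abs, abs_mul]
        congr 2
        rw [abs_of_nonneg (by positivity)]
      rw [this, Real.coe_toNNReal _ hC0, hC]
      apply mul_le_mul_of_nonneg_right _ (norm_nonneg _)
      apply mul_le_mul_of_nonneg_left _ (by positivity)
      rw [abs_div]
      exact hs _ hy x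
    have h1 := eLpNorm_le_nnreal_smul_eLpNorm_of_ae_le_mul hbd 2
    have h2 := scale_eLpNorm hy w hwmeas
    calc eLpNorm (F k) 2 (volume : Measure ℝ)
        ≤ (C.toNNReal : ℝ≥0∞) * eLpNorm (fun x => w ((a / f k) * x)) 2 volume := h1
      _ = ENNReal.ofReal C * (ENNReal.ofReal (Real.sqrt |a / f k|⁻¹) *
            eLpNorm w 2 volume) := by rw [h2]; rfl
      _ = ENNReal.ofReal (C * Real.sqrt |a / f k|⁻¹) * eLpNorm w 2 volume := by
            rw [← mul_assoc, ← ENNReal.ofReal_mul hC0]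
      _ = ENNReal.ofReal ((1 / (n₁ : ℝ)) * (s (a / f k) * Real.sqrt (|a| / |f k|))) *
            eLpNorm w 2 volume := by
            congr 2
            have hfk : (0:ℝ) < |f k| := abs_pos.mpr (hf k)
            have haa : (0:ℝ) < |a| := abs_pos.mpr ha0
            have ht : (0:ℝ) < |a| / |f k| := by positivity
            rw [hC, abs_div, Real.sqrt_inv]
            have e1 : Real.sqrt |a| * Real.sqrt |a| = |a| := Real.mul_self_sqrt haa.le
            have e2 : Real.sqrt |f k| * Real.sqrt |f k| = |f k| := Real.mul_self_sqrt hfk.le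
            rw [eq_comm]
            field_simp
            have e3 : |f k| * Real.sqrt (|a| / |f k|) ^ 2 = |a| := by
              rw [Real.sq_sqrt ht.le]; field_simp
            linear_combination s (a / f k) * e3
  -- combine
  have hsum := eLpNorm_sum_le (s := S) (f := F) (fun k _ => hFmeas k) (by norm_num : (1:ℝ≥0∞) ≤ 2)
  refine hsum.trans ?_
  have hw' : eLpNorm w 2 (volume : Measure ℝ) =
      eLpNorm (fun x => u₁ x - u₂ x) 2 (volume : Measure ℝ) := eLpNorm_sub_comm u₂ u₁ 2 volume
  calc ∑ k ∈ S, eLpNorm (F k) 2 (volume : Measure ℝ)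
      ≤ ∑ k ∈ S, ENNReal.ofReal ((1 / (n₁ : ℝ)) * (s (a / f k) * Real.sqrt (|a| / |f k|))) *
          eLpNorm w 2 (volume : Measure ℝ) := Finset.sum_le_sum hterm
    _ = ENNReal.ofReal ((1 / (n₁ : ℝ)) * ∑ k ∈ S, s (a / f k) * Real.sqrt (|a| / |f k|)) *
          eLpNorm w 2 (volume : Measure ℝ) := by
        rw [← Finset.sum_mul, Finset.mul_sum, ← ENNReal.ofReal_sum_of_nonneg]
        intro k _
        have := hspos k
        positivity
    _ = _ := by rw [hw']
end

section
/- For δ > 1/2, δ ≠ 5/2 and b ∈ (0,1), it holds that ∫_ℝ min{1, b|x|}⁴ (1+x²)^{−δ} dx = O(b^{4 ∧ (2δ−1)}) as b → 0⁺; for δ = 5/2, ∫_ℝ min{1, b|x|}⁴ (1+x²)^{−δ} dx = O(−b⁴ log b) as b → 0⁺. -/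
open MeasureTheory Set

private lemma cont_F (δ b : ℝ) :
    Continuous (fun t : ℝ => (min 1 (b * t)) ^ 4 * (1 + t ^ 2) ^ (-δ)) := by
  apply Continuous.mul
  · exact (continuous_const.min (continuous_const.mul continuous_id)).pow 4
  · exact (continuous_const.add (continuous_pow 2)).rpow_const
      (fun t => Or.inl (by have : (0:ℝ) < 1 + t ^ 2 := by positivity
                           exact this.ne'))

private lemma master (δ : ℝ) (hδ : 1 / 2 < δ) (b : ℝ) (hb : 0 < b) (hb1 : b < 1) :
    (∫ x : ℝ, (min 1 (b * |x|)) ^ 4 * (1 + x ^ 2) ^ (-δ)) ≤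
      2 * (b ^ 4 + b ^ 4 * (∫ t in Ioc (1 : ℝ) b⁻¹, t ^ (4 - 2 * δ))
        + b ^ (2 * δ - 1) / (2 * δ - 1)) := by
  set F : ℝ → ℝ := fun t => (min 1 (b * t)) ^ 4 * (1 + t ^ 2) ^ (-δ) with hF
  have hc0 : (0 : ℝ) < b⁻¹ := by positivity
  have hc1 : (1 : ℝ) < b⁻¹ := (one_lt_inv_iff₀).mpr ⟨hb, hb1⟩
  -- pointwise facts
  have hmin_nonneg : ∀ t : ℝ, 0 < t → 0 ≤ min 1 (b * t) :=
    fun t ht => le_min zero_le_one (by positivity)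
  have hrle1 : ∀ t : ℝ, (1 + t ^ 2) ^ (-δ) ≤ 1 := fun t =>
    Real.rpow_le_one_of_one_le_of_nonpos (by nlinarith [sq_nonneg t]) (by linarith)
  have htail : ∀ t : ℝ, 0 < t → (1 + t ^ 2) ^ (-δ) ≤ t ^ (-(2 * δ)) := by
    intro t ht
    have e : (t ^ 2 : ℝ) ^ (-δ) = t ^ (-(2 * δ)) := by
      rw [← Real.rpow_natCast t 2, ← Real.rpow_mul ht.le]
      norm_num
    rw [← e]
    exact Real.rpow_le_rpow_of_nonpos (by positivity) (by nlinarith) (by linarith)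
  have hF_nonneg : ∀ t : ℝ, 0 ≤ F t := by
    intro t
    have h1 : (0:ℝ) ≤ (min 1 (b * t)) ^ 4 := by positivity
    exact mul_nonneg h1 (Real.rpow_nonneg (by positivity) _)
  -- integrabilities
  have hI1 : IntegrableOn F (Ioc 0 1) := (cont_F δ b).integrableOn_Ioc
  have hI2 : IntegrableOn F (Ioc 1 b⁻¹) := (cont_F δ b).integrableOn_Ioc
  have hg3 : IntegrableOn (fun t : ℝ => t ^ (-(2 * δ))) (Ioi b⁻¹) :=
    integrableOn_Ioi_rpow_of_lt (by linarith) hc0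
  have hI3 : IntegrableOn F (Ioi b⁻¹) := by
    refine Integrable.mono' hg3 ((cont_F δ b).aestronglyMeasurable.restrict) ?_
    filter_upwards [ae_restrict_mem measurableSet_Ioi] with t ht
    have ht0 : (0 : ℝ) < t := hc0.trans ht
    rw [Real.norm_eq_abs, abs_of_nonneg (hF_nonneg t)]
    calc F t ≤ 1 * (t ^ (-(2 * δ))) := by
              refine mul_le_mul ?_ (htail t ht0) (Real.rpow_nonneg (by positivity) _) zero_le_one
              exact pow_le_one₀ (hmin_nonneg t ht0) (min_le_left _ _)
      _ = t ^ (-(2 * δ)) := one_mul _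
  -- splitting
  have hsum : (∫ t in Ioi (0:ℝ), F t) =
      (∫ t in Ioc (0:ℝ) 1, F t) + (∫ t in Ioc (1:ℝ) b⁻¹, F t) + (∫ t in Ioi b⁻¹, F t) := by
    have d1 : Disjoint (Ioc (0:ℝ) 1) (Ioc (1:ℝ) b⁻¹) := by
      rw [Set.disjoint_left]; rintro x ⟨_, h1⟩ ⟨h2, _⟩; linarith
    have d2 : Disjoint (Ioc (0:ℝ) b⁻¹) (Ioi b⁻¹) := by
      rw [Set.disjoint_left]; rintro x ⟨_, h1⟩ h2; exact absurd h2 (not_lt.mpr h1)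
    have e1 : Ioi (0:ℝ) = Ioc (0:ℝ) b⁻¹ ∪ Ioi b⁻¹ := (Ioc_union_Ioi_eq_Ioi hc0.le).symm
    have e2 : Ioc (0:ℝ) b⁻¹ = Ioc (0:ℝ) 1 ∪ Ioc (1:ℝ) b⁻¹ :=
      (Ioc_union_Ioc_eq_Ioc zero_le_one hc1.le).symm
    have hI12 : IntegrableOn F (Ioc (0:ℝ) b⁻¹) := by
      rw [e2]; exact hI1.union hI2
    rw [e1, setIntegral_union d2 measurableSet_Ioi hI12 hI3, e2,
      setIntegral_union d1 measurableSet_Ioc hI1 hI2]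
  -- whole-line to half-line
  have habs : (∫ x : ℝ, (min 1 (b * |x|)) ^ 4 * (1 + x ^ 2) ^ (-δ)) =
      2 * ∫ t in Ioi (0:ℝ), F t := by
    rw [show (fun x : ℝ => (min 1 (b * |x|)) ^ 4 * (1 + x ^ 2) ^ (-δ))
        = fun x : ℝ => F |x| by funext x; simp [hF, sq_abs]]
    exact integral_comp_abs
  -- bound piece 1
  have B1 : (∫ t in Ioc (0:ℝ) 1, F t) ≤ b ^ 4 := by
    have h := setIntegral_mono_on hI1
      ((integrableOn_const_iff).mpr (Or.inr (by simp [Real.volume_Ioc]))) measurableSet_Ioc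
      (g := fun _ : ℝ => b ^ 4) ?_
    · simpa [Real.volume_Ioc] using h
    · intro t ht
      have ht0 : 0 < t := ht.1
      have h1 : (min 1 (b * t)) ^ 4 ≤ (b * t) ^ 4 :=
        pow_le_pow_left₀ (hmin_nonneg t ht0) (min_le_right _ _) 4
      have h2 : (b * t) ^ 4 ≤ b ^ 4 := by
        have : t ^ 4 ≤ 1 := pow_le_one₀ ht0.le ht.2
        calc (b * t) ^ 4 = b ^ 4 * t ^ 4 := by ring
          _ ≤ b ^ 4 * 1 := by nlinarith [pow_pos hb 4]
          _ = b ^ 4 := mul_one _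
      calc F t ≤ (b * t) ^ 4 * 1 :=
            mul_le_mul h1 (hrle1 t) (Real.rpow_nonneg (by positivity) _) (by positivity)
        _ = (b * t) ^ 4 := mul_one _
        _ ≤ b ^ 4 := h2
  -- bound piece 2
  have B2 : (∫ t in Ioc (1:ℝ) b⁻¹, F t) ≤ b ^ 4 * (∫ t in Ioc (1:ℝ) b⁻¹, t ^ (4 - 2 * δ)) := by
    have hg2 : IntegrableOn (fun t : ℝ => b ^ 4 * t ^ (4 - 2 * δ)) (Ioc 1 b⁻¹) := by
      refine (ContinuousOn.integrableOn_Icc ?_).mono_set Ioc_subset_Icc_self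
      exact continuousOn_const.mul (ContinuousOn.rpow_const continuousOn_id
        (fun t ht => Or.inl (by intro h; rw [h] at ht; exact absurd ht.1 (by norm_num))))
    rw [← MeasureTheory.integral_const_mul]
    refine setIntegral_mono_on hI2 hg2 measurableSet_Ioc ?_
    intro t ht
    have ht0 : (0:ℝ) < t := lt_trans one_pos ht.1
    have e : (t : ℝ) ^ 4 * t ^ (-(2 * δ)) = t ^ (4 - 2 * δ) := by
      rw [← Real.rpow_natCast t 4, ← Real.rpow_add ht0]
      norm_num
      ring_nf
    have h1 : (min 1 (b * t)) ^ 4 ≤ (b * t) ^ 4 :=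
      pow_le_pow_left₀ (hmin_nonneg t ht0) (min_le_right _ _) 4
    calc F t ≤ (b * t) ^ 4 * t ^ (-(2 * δ)) :=
          mul_le_mul h1 (htail t ht0) (Real.rpow_nonneg (by positivity) _) (by positivity)
      _ = b ^ 4 * (t ^ 4 * t ^ (-(2 * δ))) := by ring
      _ = b ^ 4 * t ^ (4 - 2 * δ) := by rw [e]
  -- bound piece 3
  have B3 : (∫ t in Ioi b⁻¹, F t) ≤ b ^ (2 * δ - 1) / (2 * δ - 1) := by
    have h := setIntegral_mono_on hI3 hg3 measurableSet_Ioi ?_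
    · have e1 : (∫ t in Ioi b⁻¹, (fun t : ℝ => t ^ (-(2 * δ))) t)
          = b ^ (2 * δ - 1) / (2 * δ - 1) := by
        rw [integral_Ioi_rpow_of_lt (by linarith) hc0]
        have e2 : (b⁻¹ : ℝ) ^ (-(2 * δ) + 1) = b ^ (2 * δ - 1) := by
          rw [Real.inv_rpow hb.le, ← Real.rpow_neg hb.le]
          ring_nf
        rw [e2, show (-(2 * δ) + 1) = -(2 * δ - 1) by ring, neg_div_neg_eq]
      exact e1 ▸ h
    · intro t ht
      have ht0 : (0:ℝ) < t := hc0.trans ht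
      calc F t ≤ 1 * (t ^ (-(2 * δ))) := by
            refine mul_le_mul ?_ (htail t ht0) (Real.rpow_nonneg (by positivity) _) zero_le_one
            exact pow_le_one₀ (hmin_nonneg t ht0) (min_le_left _ _)
        _ = t ^ (-(2 * δ)) := one_mul _
  rw [habs, hsum]
  linarith

open intervalIntegral in
/-- Asymptotics of `∫ min{1, b|x|}⁴ (1+x²)^{−δ} dx` as `b → 0⁺`:
`O(b^{4 ∧ (2δ−1)})` for `δ ≠ 5/2` and `O(−b⁴ log b)` for `δ = 5/2`. -/
theorem stmt8 (δ : ℝ) (hδ : 1 / 2 < δ) :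
    ((δ ≠ 5 / 2) → ∃ C > (0 : ℝ), ∃ b₀ ∈ Set.Ioo (0 : ℝ) 1, ∀ b ∈ Set.Ioo (0 : ℝ) b₀,
      (∫ x : ℝ, (min 1 (b * |x|)) ^ 4 * (1 + x ^ 2) ^ (-δ)) ≤
        C * b ^ (min (4 : ℝ) (2 * δ - 1))) ∧
    ((δ = 5 / 2) → ∃ C > (0 : ℝ), ∃ b₀ ∈ Set.Ioo (0 : ℝ) 1, ∀ b ∈ Set.Ioo (0 : ℝ) b₀,
      (∫ x : ℝ, (min 1 (b * |x|)) ^ 4 * (1 + x ^ 2) ^ (-δ)) ≤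
        C * (-(b ^ 4 * Real.log b))) := by
  constructor
  · intro hne
    rcases lt_or_gt_of_ne hne with hlt | hgt
    · -- 1/2 < δ < 5/2
      have h5 : (0:ℝ) < 5 - 2 * δ := by linarith
      have h1 : (0:ℝ) < 2 * δ - 1 := by linarith
      refine ⟨2 * (1 + 1 / (5 - 2 * δ) + 1 / (2 * δ - 1)), ?_, 1/2,
        ⟨by norm_num, by norm_num⟩, ?_⟩
      · have := one_div_pos.mpr h5; have := one_div_pos.mpr h1; linarith
      · rintro b ⟨hb0, hb2⟩
        have hb1 : b < 1 := by linarith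
        have hm := master δ hδ b hb0 hb1
        have hc0 : (0:ℝ) < b⁻¹ := by positivity
        have hc1 : (1:ℝ) ≤ b⁻¹ := le_of_lt ((one_lt_inv_iff₀).mpr ⟨hb0, hb1⟩)
        have einv : ∀ x : ℝ, (b⁻¹:ℝ) ^ x = b ^ (-x) := fun x => by
          rw [Real.inv_rpow hb0.le, ← Real.rpow_neg hb0.le]
        have hT : (∫ t in Set.Ioc (1:ℝ) b⁻¹, t ^ (4 - 2 * δ))
            = (b ^ (2 * δ - 5) - 1) / (5 - 2 * δ) := by
          rw [← intervalIntegral.integral_of_le hc1,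
            integral_rpow (Or.inl (by linarith)), Real.one_rpow, einv,
            show -(4 - 2 * δ + 1) = 2 * δ - 5 by ring,
            show (4 - 2 * δ + 1) = 5 - 2 * δ by ring]
        rw [hT] at hm
        have e : (b:ℝ) ^ 4 * b ^ (2 * δ - 5) = b ^ (2 * δ - 1) := by
          rw [← Real.rpow_natCast b 4, ← Real.rpow_add hb0]
          norm_num
          congr 1
          ring
        have key : b ^ 4 * ((b ^ (2 * δ - 5) - 1) / (5 - 2 * δ))
            ≤ b ^ (2 * δ - 1) / (5 - 2 * δ) := by
          have h' : b ^ 4 * (b ^ (2 * δ - 5) - 1) ≤ b ^ (2 * δ - 1) := by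
            nlinarith [pow_pos hb0 4]
          calc b ^ 4 * ((b ^ (2 * δ - 5) - 1) / (5 - 2 * δ))
              = (b ^ 4 * (b ^ (2 * δ - 5) - 1)) / (5 - 2 * δ) := by ring
            _ ≤ b ^ (2 * δ - 1) / (5 - 2 * δ) := (div_le_div_iff_of_pos_right h5).mpr h'
        have h44 : (b:ℝ) ^ 4 ≤ b ^ (2 * δ - 1) := by
          rw [← Real.rpow_natCast b 4]
          exact Real.rpow_le_rpow_of_exponent_ge hb0 hb1.le (by push_cast; linarith)
        have hmin : min (4:ℝ) (2 * δ - 1) = 2 * δ - 1 := min_eq_right (by linarith)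
        rw [hmin]
        have e1 : b ^ (2 * δ - 1) / (5 - 2 * δ) = 1 / (5 - 2 * δ) * b ^ (2 * δ - 1) := by
          ring
        have e2 : b ^ (2 * δ - 1) / (2 * δ - 1) = 1 / (2 * δ - 1) * b ^ (2 * δ - 1) := by
          ring
        nlinarith [hm, key, h44]
    · -- δ > 5/2
      have h25 : (0:ℝ) < 2 * δ - 5 := by linarith
      have h1 : (0:ℝ) < 2 * δ - 1 := by linarith
      refine ⟨2 * (1 + 1 / (2 * δ - 5) + 1 / (2 * δ - 1)), ?_, 1/2,
        ⟨by norm_num, by norm_num⟩, ?_⟩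
      · have := one_div_pos.mpr h25; have := one_div_pos.mpr h1; linarith
      · rintro b ⟨hb0, hb2⟩
        have hb1 : b < 1 := by linarith
        have hm := master δ hδ b hb0 hb1
        have hc0 : (0:ℝ) < b⁻¹ := by positivity
        have hc1 : (1:ℝ) ≤ b⁻¹ := le_of_lt ((one_lt_inv_iff₀).mpr ⟨hb0, hb1⟩)
        have einv : ∀ x : ℝ, (b⁻¹:ℝ) ^ x = b ^ (-x) := fun x => by
          rw [Real.inv_rpow hb0.le, ← Real.rpow_neg hb0.le]
        have hT : (∫ t in Set.Ioc (1:ℝ) b⁻¹, t ^ (4 - 2 * δ))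
            = (b ^ (2 * δ - 5) - 1) / (5 - 2 * δ) := by
          rw [← intervalIntegral.integral_of_le hc1,
            integral_rpow (Or.inr ⟨by intro h; rw [sub_eq_iff_eq_add] at h; linarith,
              Set.notMem_uIcc_of_lt zero_lt_one hc0⟩), Real.one_rpow, einv,
            show -(4 - 2 * δ + 1) = 2 * δ - 5 by ring,
            show (4 - 2 * δ + 1) = 5 - 2 * δ by ring]
        rw [hT] at hm
        have hx1 : b ^ (2 * δ - 5) ≤ 1 := Real.rpow_le_one hb0.le hb1.le (by linarith)
        have hx0 : (0:ℝ) ≤ b ^ (2 * δ - 5) := Real.rpow_nonneg hb0.le _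
        have key : (b ^ (2 * δ - 5) - 1) / (5 - 2 * δ) ≤ 1 / (2 * δ - 5) := by
          rw [show (b ^ (2 * δ - 5) - 1) = -(1 - b ^ (2 * δ - 5)) by ring,
            show (5 - 2 * δ) = -(2 * δ - 5) by ring, neg_div_neg_eq]
          exact (div_le_div_iff_of_pos_right h25).mpr (by linarith)
        have h44 : b ^ (2 * δ - 1) ≤ (b:ℝ) ^ 4 := by
          rw [← Real.rpow_natCast b 4]
          exact Real.rpow_le_rpow_of_exponent_ge hb0 hb1.le (by push_cast; linarith)
        have hmin : min (4:ℝ) (2 * δ - 1) = 4 := min_eq_left (by linarith)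
        rw [hmin, show (4:ℝ) = ((4:ℕ):ℝ) by norm_num, Real.rpow_natCast]
        have hB : (0:ℝ) < b ^ 4 := by positivity
        have key2 : b ^ 4 * ((b ^ (2 * δ - 5) - 1) / (5 - 2 * δ)) ≤ b ^ 4 * (1 / (2 * δ - 5)) :=
          mul_le_mul_of_nonneg_left key hB.le
        have e2 : b ^ (2 * δ - 1) / (2 * δ - 1) ≤ 1 / (2 * δ - 1) * b ^ 4 := by
          rw [div_eq_mul_inv, one_div]
          exact mul_le_mul_of_nonneg_right h44 (by positivity) |>.trans_eq (mul_comm _ _)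
        nlinarith [hm, key2, e2]
  · intro heq
    subst heq
    refine ⟨5, by norm_num, Real.exp (-1),
      ⟨Real.exp_pos _, (Real.exp_lt_exp.mpr (by norm_num)).trans_eq Real.exp_zero⟩, ?_⟩
    rintro b ⟨hb0, hbe⟩
    have hb1 : b < 1 := hbe.trans ((Real.exp_lt_exp.mpr (by norm_num)).trans_eq Real.exp_zero)
    have hm := master (5/2) (by norm_num) b hb0 hb1
    have hc0 : (0:ℝ) < b⁻¹ := by positivity
    have hc1 : (1:ℝ) ≤ b⁻¹ := le_of_lt ((one_lt_inv_iff₀).mpr ⟨hb0, hb1⟩)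
    have hL : 1 ≤ -Real.log b := by
      have h := Real.log_lt_log hb0 hbe
      rw [Real.log_exp] at h; linarith
    have hT : (∫ t in Set.Ioc (1:ℝ) b⁻¹, t ^ (4 - 2 * (5/2:ℝ))) = -Real.log b := by
      rw [← intervalIntegral.integral_of_le hc1,
        show (4 - 2 * (5/2:ℝ)) = -1 by norm_num]
      simp_rw [Real.rpow_neg_one]
      rw [integral_inv (Set.notMem_uIcc_of_lt zero_lt_one hc0), div_one, Real.log_inv]
    rw [hT, show (2 * (5/2:ℝ) - 1) = ((4:ℕ):ℝ) by norm_num, Real.rpow_natCast] at hm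
    have hB : (0:ℝ) < b ^ 4 := by positivity
    nlinarith [hm, hB, hL, mul_le_mul_of_nonneg_left hL hB.le]
end

section
/- Let (ψ_j) be an orthonormal basis of a closed subspace U of L²(ℝ) and let T: ℓ² → U map x = (x_j) to ∑_j x_j η_j, where η_j(x) = ∑_{k=1}^n (1/|f_k|)(h(x)/h((f₁/f_k)x)) ψ_j((f₁/f_k)x). Assume |f₁| ≥ max_{k: f_k≠f₁}|f_k|, each η_j ∈ U, and e(f,h) = (1/n₁)∑_{k: f_k≠f₁} s(f₁/f_k)√(|f₁|/|f_k|) < 1. Then ‖η_j‖₂ ≥ (n₁/|f₁|)(1 − e(f,h)) > 0 for every j; in particular each η_j is nonzero. -/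
open MeasureTheory Finset

private lemma sqrt_swap {x y : ℝ} (hx : 0 < x) (hy : 0 < y) :
    (1 / x) * Real.sqrt (x / y) = (1 / y) * Real.sqrt (y / x) := by
  have h1 : (1 / x) * Real.sqrt (x / y) = Real.sqrt ((1 / x) ^ 2 * (x / y)) := by
    rw [Real.sqrt_mul (by positivity), Real.sqrt_sq (by positivity)]
  have h2 : (1 / y) * Real.sqrt (y / x) = Real.sqrt ((1 / y) ^ 2 * (y / x)) := by
    rw [Real.sqrt_mul (by positivity), Real.sqrt_sq (by positivity)]
  rw [h1, h2]
  congr 1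
  field_simp

/-- The functions `η_j` built from an `L²`-normalized system `ψ_j` are bounded below in
`L²`-norm by `(n₁/|f₁|)(1 − e(f,h)) > 0`; in particular they are nonzero. -/
theorem stmt11 {n : ℕ} (hn : 0 < n) (f : Fin n → ℝ) (hf : ∀ k, f k ≠ 0)
    (hmax : ∀ k, f k ≠ f ⟨0, hn⟩ → |f k| ≤ |f ⟨0, hn⟩|)
    (h : ℝ → ℝ) (hmeas : Measurable h) (hne : ∀ x, h x ≠ 0)
    (s : ℝ → ℝ) (hs : ∀ y : ℝ, y ≠ 0 → ∀ x : ℝ, |h x| / |h (y * x)| ≤ s y)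
    (n₁ : ℕ) (hn₁ : n₁ = (Finset.univ.filter (fun k => f k = f ⟨0, hn⟩)).card)
    (e : ℝ)
    (he_def : e = (1 / (n₁ : ℝ)) * ∑ k ∈ Finset.univ.filter (fun k => f k ≠ f ⟨0, hn⟩),
        s (f ⟨0, hn⟩ / f k) * Real.sqrt (|f ⟨0, hn⟩| / |f k|))
    (he : e < 1)
    (ψ : ℕ → ℝ → ℝ) (hψm : ∀ j, MemLp (ψ j) 2 (volume : Measure ℝ))
    (hψ : ∀ j, eLpNorm (ψ j) 2 (volume : Measure ℝ) = 1)
    (η : ℕ → ℝ → ℝ)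
    (hη : ∀ j : ℕ, ∀ x : ℝ, η j x = ∑ k : Fin n,
      (1 / |f k|) * (h x / h ((f ⟨0, hn⟩ / f k) * x)) * ψ j ((f ⟨0, hn⟩ / f k) * x)) :
    ∀ j : ℕ, ENNReal.ofReal (((n₁ : ℝ) / |f ⟨0, hn⟩|) * (1 - e)) ≤
      eLpNorm (η j) 2 (volume : Measure ℝ) := by
  intro j
  set f₀ : ℝ := f ⟨0, hn⟩ with hf₀def
  have hf₀ne : f₀ ≠ 0 := hf _
  have hf₀pos : (0 : ℝ) < |f₀| := abs_pos.2 hf₀ne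
  have hn₁pos : 0 < n₁ := by
    rw [hn₁]
    exact Finset.card_pos.2 ⟨⟨0, hn⟩, Finset.mem_filter.2 ⟨Finset.mem_univ _, rfl⟩⟩
  have hn₁ne : (n₁ : ℝ) ≠ 0 := Nat.cast_ne_zero.2 hn₁pos.ne'
  set a : ℝ := (n₁ : ℝ) / |f₀| with ha
  have hapos : 0 < a := div_pos (by exact_mod_cast hn₁pos) hf₀pos
  -- s is nonneg at the relevant points
  have hsnn : ∀ k : Fin n, 0 ≤ s (f₀ / f k) := by
    intro k
    have hc : f₀ / f k ≠ 0 := div_ne_zero hf₀ne (hf k)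
    calc (0 : ℝ) ≤ |h 0| / |h ((f₀ / f k) * 0)| :=
          div_nonneg (abs_nonneg _) (abs_nonneg _)
      _ ≤ s (f₀ / f k) := hs _ hc 0
  have he0 : 0 ≤ e := by
    rw [he_def]
    refine mul_nonneg (by positivity) (Finset.sum_nonneg fun k _ => ?_)
    exact mul_nonneg (hsnn k) (Real.sqrt_nonneg _)
  -- individual terms
  set term : Fin n → ℝ → ℝ := fun k x =>
    (1 / |f k|) * (h x / h ((f₀ / f k) * x)) * ψ j ((f₀ / f k) * x) with hterm
  set S : Finset (Fin n) := Finset.univ.filter (fun k => f k ≠ f₀) with hSdef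
  set r : ℝ → ℝ := fun x => ∑ k ∈ S, term k x with hrdef
  -- measurability tools
  have hqmp : ∀ c : ℝ, c ≠ 0 →
      Measure.QuasiMeasurePreserving (fun x : ℝ => c * x) volume volume := by
    intro c hc
    refine ⟨measurable_const_mul c, ?_⟩
    rw [Real.map_volume_mul_left hc]
    exact Measure.smul_absolutelyContinuous
  have hψc : ∀ c : ℝ, c ≠ 0 →
      AEStronglyMeasurable (fun x => ψ j (c * x)) (volume : Measure ℝ) := by
    intro c hc
    exact (hψm j).1.comp_quasiMeasurePreserving (hqmp c hc)
  have hterma : ∀ k : Fin n, AEStronglyMeasurable (term k) (volume : Measure ℝ) := by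
    intro k
    have hc : f₀ / f k ≠ 0 := div_ne_zero hf₀ne (hf k)
    exact ((measurable_const.mul
      (hmeas.div (hmeas.comp (measurable_const_mul _)))).aestronglyMeasurable).mul (hψc _ hc)
  have hra : AEStronglyMeasurable r (volume : Measure ℝ) := by
    exact (Finset.aestronglyMeasurable_sum S fun k _ => hterma k).congr
      (Filter.Eventually.of_forall fun x => by simp [hrdef, Finset.sum_apply])
  -- the decomposition η j = a • ψ j + r
  have hdecomp : ∀ x, η j x = a * ψ j x + r x := by
    intro x
    rw [hη j x,
      ← Finset.sum_filter_add_sum_filter_not Finset.univ (fun k => f k = f₀) (fun k =>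
        (1 / |f k|) * (h x / h ((f₀ / f k) * x)) * ψ j ((f₀ / f k) * x))]
    congr 1
    have heq : ∀ k ∈ Finset.univ.filter (fun k => f k = f₀),
        (1 / |f k|) * (h x / h ((f₀ / f k) * x)) * ψ j ((f₀ / f k) * x)
          = (1 / |f₀|) * ψ j x := by
      intro k hk
      have hk' : f k = f₀ := (Finset.mem_filter.1 hk).2
      rw [hk', div_self hf₀ne, one_mul, div_self (hne x), mul_one]
    rw [Finset.sum_congr rfl heq, Finset.sum_const, ← hn₁, nsmul_eq_mul, ha]
    ring
  -- the norm of the main part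
  have hg : eLpNorm (fun x => a * ψ j x) 2 (volume : Measure ℝ) = ENNReal.ofReal a := by
    have hsm : (fun x => a * ψ j x) = a • ψ j := by
      funext x; simp
    rw [hsm, eLpNorm_const_smul, hψ j, mul_one, ← Real.enorm_eq_ofReal hapos.le]
  -- the norm of scaled ψ
  have hscale : ∀ c : ℝ, c ≠ 0 → eLpNorm (fun x => ψ j (c * x)) 2 (volume : Measure ℝ)
      = ENNReal.ofReal (Real.sqrt |c|⁻¹) := by
    intro c hc
    have h1 : eLpNorm ((ψ j) ∘ (fun x => c * x)) 2 (volume : Measure ℝ)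
        = eLpNorm (ψ j) 2 (Measure.map (fun x : ℝ => c * x) volume) := by
      refine (eLpNorm_map_measure ?_ (measurable_const_mul c).aemeasurable).symm
      rw [Real.map_volume_mul_left hc]
      exact (hψm j).1.smul_measure _
    have h2 : eLpNorm (ψ j) 2 (Measure.map (fun x : ℝ => c * x) volume)
        = ENNReal.ofReal |c⁻¹| ^ ((1 / 2 : ENNReal)).toReal * 1 := by
      rw [Real.map_volume_mul_left hc,
        eLpNorm_smul_measure_of_ne_zero (by simpa using hc) _ _ _,
        hψ j, smul_eq_mul]
    have h3 : ((1 / 2 : ENNReal)).toReal = (1 : ℝ) / 2 := by simp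
    have h4 : ENNReal.ofReal |c⁻¹| ^ ((1 : ℝ) / 2) = ENNReal.ofReal (Real.sqrt |c|⁻¹) := by
      rw [ENNReal.ofReal_rpow_of_nonneg (abs_nonneg _) (by norm_num), abs_inv,
        ← Real.sqrt_eq_rpow]
    show eLpNorm ((ψ j) ∘ (fun x => c * x)) 2 (volume : Measure ℝ) = _
    rw [h1, h2, h3, mul_one, h4]
  -- bound on each term
  have hkbound : ∀ k ∈ S, eLpNorm (term k) 2 (volume : Measure ℝ)
      ≤ ENNReal.ofReal ((1 / |f₀|) * (s (f₀ / f k) * Real.sqrt (|f₀| / |f k|))) := by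
    intro k _
    have hfk : (0 : ℝ) < |f k| := abs_pos.2 (hf k)
    have hc : f₀ / f k ≠ 0 := div_ne_zero hf₀ne (hf k)
    set C : ℝ := (1 / |f k|) * s (f₀ / f k) with hC
    have hCnn : 0 ≤ C := mul_nonneg (by positivity) (hsnn k)
    have hpoint : ∀ x, ‖term k x‖ ≤ C * |ψ j ((f₀ / f k) * x)| := by
      intro x
      have hratio : |h x / h ((f₀ / f k) * x)| ≤ s (f₀ / f k) := by
        rw [abs_div]
        exact hs _ hc x
      calc ‖term k x‖ = (1 / |f k|) * |h x / h ((f₀ / f k) * x)| * |ψ j ((f₀ / f k) * x)| := by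
            rw [Real.norm_eq_abs]
            simp [hterm, abs_mul, abs_div]
        _ ≤ (1 / |f k|) * s (f₀ / f k) * |ψ j ((f₀ / f k) * x)| := by
            gcongr
        _ = C * |ψ j ((f₀ / f k) * x)| := rfl
    calc eLpNorm (term k) 2 (volume : Measure ℝ)
        ≤ eLpNorm (fun x => C * |ψ j ((f₀ / f k) * x)|) 2 (volume : Measure ℝ) :=
          eLpNorm_mono_real hpoint
      _ = (‖C‖₊ : ENNReal) * eLpNorm (fun x => |ψ j ((f₀ / f k) * x)|) 2 (volume : Measure ℝ) := by
          have hsm : (fun x => C * |ψ j ((f₀ / f k) * x)|)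
              = C • (fun x => |ψ j ((f₀ / f k) * x)|) := by
            funext x; simp
          rw [hsm, eLpNorm_const_smul, enorm_eq_nnnorm]
      _ = (‖C‖₊ : ENNReal) * eLpNorm (fun x => ψ j ((f₀ / f k) * x)) 2 (volume : Measure ℝ) := by
          congr 1
          have : (fun x => |ψ j ((f₀ / f k) * x)|)
              = (fun x => ‖ψ j ((f₀ / f k) * x)‖) := by
            funext x; rw [Real.norm_eq_abs]
          rw [this, eLpNorm_norm]
      _ = ENNReal.ofReal C * ENNReal.ofReal (Real.sqrt |f₀ / f k|⁻¹) := by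
          rw [hscale _ hc, ← enorm_eq_nnnorm, Real.enorm_eq_ofReal hCnn]
      _ = ENNReal.ofReal (C * Real.sqrt |f₀ / f k|⁻¹) :=
          (ENNReal.ofReal_mul hCnn).symm
      _ = ENNReal.ofReal ((1 / |f₀|) * (s (f₀ / f k) * Real.sqrt (|f₀| / |f k|))) := by
          congr 1
          have habs : |f₀ / f k|⁻¹ = |f k| / |f₀| := by
            rw [abs_div, inv_div]
          rw [hC, habs]
          have := sqrt_swap hfk hf₀pos
          linear_combination s (f₀ / f k) * this
  -- bound on the remainder
  have hrbound : eLpNorm r 2 (volume : Measure ℝ) ≤ ENNReal.ofReal (a * e) := by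
    have hrsum : r = ∑ k ∈ S, term k := by
      funext x; simp [hrdef, Finset.sum_apply]
    calc eLpNorm r 2 (volume : Measure ℝ)
        ≤ ∑ k ∈ S, eLpNorm (term k) 2 (volume : Measure ℝ) := by
          rw [hrsum]
          exact eLpNorm_sum_le (fun k _ => hterma k) one_le_two
      _ ≤ ∑ k ∈ S, ENNReal.ofReal
            ((1 / |f₀|) * (s (f₀ / f k) * Real.sqrt (|f₀| / |f k|))) :=
          Finset.sum_le_sum hkbound
      _ = ENNReal.ofReal (∑ k ∈ S,
            (1 / |f₀|) * (s (f₀ / f k) * Real.sqrt (|f₀| / |f k|))) := by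
          rw [ENNReal.ofReal_sum_of_nonneg]
          intro k _
          exact mul_nonneg (by positivity) (mul_nonneg (hsnn k) (Real.sqrt_nonneg _))
      _ = ENNReal.ofReal (a * e) := by
          congr 1
          rw [← Finset.mul_sum, he_def, ha]
          field_simp
  -- triangle inequality
  have hηasm : AEStronglyMeasurable (η j) (volume : Measure ℝ) := by
    have hη' : η j = (fun x => a * ψ j x) + r := funext fun x => by
      rw [hdecomp x]; rfl
    rw [hη']
    exact (((hψm j).1.const_mul a)).add hra
  have htri : ENNReal.ofReal a
      ≤ eLpNorm (η j) 2 (volume : Measure ℝ) + eLpNorm r 2 (volume : Measure ℝ) := by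
    have hgη : (fun x => a * ψ j x) = η j - r := funext fun x => by
      rw [Pi.sub_apply, hdecomp x]; ring
    calc ENNReal.ofReal a = eLpNorm (η j - r) 2 (volume : Measure ℝ) := by
          rw [← hgη, hg]
      _ ≤ _ := eLpNorm_sub_le hηasm hra one_le_two
  -- conclusion
  calc ENNReal.ofReal (a * (1 - e))
      = ENNReal.ofReal a - ENNReal.ofReal (a * e) := by
        rw [mul_one_sub, ENNReal.ofReal_sub _ (mul_nonneg hapos.le he0)]
    _ ≤ eLpNorm (η j) 2 (volume : Measure ℝ) := by
        rw [tsub_le_iff_right]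
        exact htri.trans (add_le_add le_rfl hrbound)
end
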